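/- The singular points of the Segre cubic X are exactly the S_6-orbit of (1:1:1:-1:-1:-1), and there are precisely 10 such points. -/

import Mathlib

namespace SegreAux

def T3 : Finset (Fin 6) := {0, 1, 2}

lemma hp (j : Fin 6) :
    (![1, 1, 1, -1, -1, -1] : Fin 6 → ℂ) j = if j ∈ T3 then 1 else -1 := by
  fin_cases j <;>
    first
      | (rw [if_pos (by decide)]; rfl)
      | (rw [if_neg (by decide)]; rfl)

set_option maxRecDepth 10000 in
lemma exists_perm : ∀ S : Finset (Fin 6), S.card = 3 →
    ∃ σ : Equiv.Perm (Fin 6), ∀ i, (σ i ∈ T3 ↔ i ∈ S) := by decide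

lemma hp_sq (j : Fin 6) : (![1, 1, 1, -1, -1, -1] : Fin 6 → ℂ) j ^ 2 = 1 := by
  rw [hp]; split <;> norm_num

lemma hp_cube (j : Fin 6) :
    (![1, 1, 1, -1, -1, -1] : Fin 6 → ℂ) j ^ 3 = (![1, 1, 1, -1, -1, -1] : Fin 6 → ℂ) j := by
  rw [hp]; split <;> norm_num

lemma sum_pp : ∑ j, (![1, 1, 1, -1, -1, -1] : Fin 6 → ℂ) j = 0 := by
  norm_num [Fin.sum_univ_six, Matrix.cons_val_succ,
    show (![1, 1, 1, -1, -1, -1] : Fin 6 → ℂ) 5 = -1 from rfl,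
    show (![1, 1, 1, -1, -1, -1] : Fin 6 → ℂ) 2 = 1 from rfl,
    show (![1, 1, 1, -1, -1, -1] : Fin 6 → ℂ) 3 = -1 from rfl,
    show (![1, 1, 1, -1, -1, -1] : Fin 6 → ℂ) 4 = -1 from rfl]

end SegreAux

open SegreAux in
/-- The singular points of the Segre cubic (points of `P^5` satisfying
`∑ xᵢ = 0`, `∑ xᵢ³ = 0`, where the Jacobian of the two defining forms has
rank `< 2`) are exactly the `S₆`-orbit of `(1:1:1:-1:-1:-1)`, and there are
precisely `10` such points in projective space. -/
theorem segre_cubic_singular_locus :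
    let p : Fin 6 → ℂ := ![1, 1, 1, -1, -1, -1]
    ({x : Fin 6 → ℂ | x ≠ 0 ∧ ∑ i, x i = 0 ∧ ∑ i, x i ^ 3 = 0 ∧
        (Matrix.of ![fun _ => (1 : ℂ), fun i => 3 * x i ^ 2] :
          Matrix (Fin 2) (Fin 6) ℂ).rank < 2}
      = {x : Fin 6 → ℂ | ∃ (σ : Equiv.Perm (Fin 6)) (c : ℂ), c ≠ 0 ∧
          x = fun i => c * p (σ i)}) ∧
    Set.ncard {q : Projectivization ℂ (Fin 6 → ℂ) |
        ∃ (x : Fin 6 → ℂ) (hx : x ≠ 0), q = Projectivization.mk ℂ x hx ∧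
          ∃ σ : Equiv.Perm (Fin 6), x = fun i => p (σ i)} = 10 := by
  intro p
  have hpdef : p = ![1, 1, 1, -1, -1, -1] := rfl
  classical
  constructor
  · ext x
    simp only [Set.mem_setOf_eq]
    constructor
    · rintro ⟨hx0, h1, h3, hr⟩
      -- rows are linearly dependent
      have hnLI : ¬ LinearIndependent ℂ
          (![fun _ => (1 : ℂ), fun i => 3 * x i ^ 2] : Fin 2 → Fin 6 → ℂ) := by
        intro h
        have := h.rank_matrix (M := (Matrix.of ![fun _ => (1 : ℂ), fun i => 3 * x i ^ 2] :
          Matrix (Fin 2) (Fin 6) ℂ))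
        rw [this] at hr
        simp at hr
      rw [linearIndependent_fin2] at hnLI
      push_neg at hnLI
      -- all squares are equal
      have hsq : ∀ i, x i ^ 2 = x 0 ^ 2 := by
        rcases eq_or_ne (![fun _ => (1 : ℂ), fun i => 3 * x i ^ 2] 1) 0 with hz | hz
        · exfalso; apply hx0; funext i
          have := congrFun hz i
          simp [Matrix.cons_val_one, Matrix.head_cons] at this
          simpa [pow_eq_zero_iff] using this
        · obtain ⟨a, ha⟩ := hnLI hz
          intro i
          have hi := congrFun ha i
          have h0 := congrFun ha 0
          simp [Matrix.cons_val_one, Matrix.head_cons, Matrix.cons_val_zero] at hi h0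
          have ha0 : a ≠ 0 := by rintro rfl; simp at h0
          have h2 : a * (3 * x i ^ 2) = a * (3 * x 0 ^ 2) := by rw [hi, h0]
          have h3' := mul_left_cancel₀ ha0 h2
          have := mul_left_cancel₀ (by norm_num : (3 : ℂ) ≠ 0) h3'
          exact this
      have hx00 : x 0 ≠ 0 := by
        intro h0
        apply hx0; funext i
        have := hsq i
        rw [h0] at this
        simpa [pow_eq_zero_iff] using this
      have hpm : ∀ i, x i = x 0 ∨ x i = -x 0 := by
        intro i
        have h : (x i - x 0) * (x i + x 0) = 0 := by linear_combination hsq i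
        rcases mul_eq_zero.1 h with h | h
        · exact Or.inl (sub_eq_zero.mp h)
        · exact Or.inr (eq_neg_of_add_eq_zero_left h)
      set S := Finset.univ.filter (fun i => x i = x 0) with hSdef
      have hmem : ∀ i, i ∈ S ↔ x i = x 0 := by intro i; simp [hSdef]
      have hnot : ∀ i, i ∉ S → x i = -x 0 := fun i hi =>
        (hpm i).resolve_left (fun h => hi ((hmem i).2 h))
      have hcard : S.card = 3 := by
        have hsum := h1
        rw [← Finset.sum_filter_add_sum_filter_not Finset.univ (fun i => x i = x 0) x] at hsum
        have e1 : ∑ i ∈ Finset.univ.filter (fun i => x i = x 0), x i = (S.card : ℂ) * x 0 := by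
          rw [Finset.sum_congr rfl (fun i hi => (Finset.mem_filter.1 hi).2)]
          simp [hSdef, mul_comm]
        have e2 : ∑ i ∈ Finset.univ.filter (fun i => ¬ x i = x 0), x i
            = ((Finset.univ.filter (fun i => ¬ x i = x 0)).card : ℂ) * (-x 0) := by
          rw [Finset.sum_congr rfl (fun i hi => hnot i
            (fun h => absurd ((hmem i).1 h) (Finset.mem_filter.1 hi).2))]
          simp [mul_comm]
        have hc6 : S.card + (Finset.univ.filter (fun i => ¬ x i = x 0)).card = 6 := by
          simpa using Finset.card_filter_add_card_filter_not
            (s := (Finset.univ : Finset (Fin 6))) (p := fun i => x i = x 0)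
        rw [e1, e2] at hsum
        have hz : ((S.card : ℂ) - ((Finset.univ.filter (fun i => ¬ x i = x 0)).card : ℂ)) * x 0
            = 0 := by linear_combination hsum
        rcases mul_eq_zero.1 hz with h | h
        · have : (S.card : ℂ) = ((Finset.univ.filter (fun i => ¬ x i = x 0)).card : ℂ) :=
            sub_eq_zero.mp h
          have hnat : S.card = (Finset.univ.filter (fun i => ¬ x i = x 0)).card :=
            Nat.cast_injective this
          omega
        · exact absurd h hx00
      obtain ⟨σ, hσ⟩ := exists_perm S hcard
      refine ⟨σ, x 0, hx00, funext fun i => ?_⟩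
      rw [hpdef, hp (σ i)]
      by_cases hi : i ∈ S
      · rw [if_pos ((hσ i).2 hi), mul_one]; exact (hmem i).1 hi
      · rw [if_neg (fun h => hi ((hσ i).1 h)), hnot i hi]; ring
    · rintro ⟨σ, c, hc, rfl⟩
      refine ⟨?_, ?_, ?_, ?_⟩
      · intro h
        have := congrFun h (σ.symm 0)
        simp [hpdef] at this
        exact hc this
      · have h : ∑ i, c * p (σ i) = c * ∑ i, p (σ i) := by rw [Finset.mul_sum]
        rw [h, Equiv.sum_comp σ p, hpdef, sum_pp, mul_zero]
      · have h : ∑ i, (c * p (σ i)) ^ 3 = c ^ 3 * ∑ i, p (σ i) ^ 3 := by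
          rw [Finset.mul_sum]; exact Finset.sum_congr rfl fun i _ => by ring
        rw [h, Equiv.sum_comp σ (fun j => p j ^ 3)]
        have h2 : ∑ j, p j ^ 3 = 0 := by
          rw [Finset.sum_congr rfl fun j _ => (by rw [hpdef]; exact hp_cube j :
            p j ^ 3 = p j), hpdef, sum_pp]
        rw [h2, mul_zero]
      · rw [Matrix.rank_eq_finrank_span_row]
        have hone : (fun _ => (1 : ℂ)) ≠ (0 : Fin 6 → ℂ) :=
          fun h => one_ne_zero (congrFun h 0)
        have hle : Submodule.span ℂ (Set.range (Matrix.of ![fun _ => (1 : ℂ),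
            fun i => 3 * (c * p (σ i)) ^ 2] : Matrix (Fin 2) (Fin 6) ℂ)) ≤
            Submodule.span ℂ {fun _ => (1 : ℂ)} := by
          rw [Submodule.span_le]
          rintro y ⟨i, rfl⟩
          fin_cases i
          · exact Submodule.subset_span rfl
          · have hrow : (Matrix.of ![fun _ => (1 : ℂ), fun i => 3 * (c * p (σ i)) ^ 2] :
                Matrix (Fin 2) (Fin 6) ℂ) 1 = (3 * c ^ 2) • (fun _ => (1 : ℂ)) := by
              funext j
              have hsq1 : p (σ j) ^ 2 = 1 := by rw [hpdef]; exact hp_sq _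
              simp only [Matrix.of_apply, Matrix.cons_val_one, Matrix.head_cons,
                Matrix.cons_val_zero, Pi.smul_apply, smul_eq_mul, mul_one]
              linear_combination (3 * c ^ 2) * hsq1
            exact hrow ▸ Submodule.smul_mem _ _ (Submodule.subset_span rfl)
        calc Module.finrank ℂ ↥(Submodule.span ℂ (Set.range (Matrix.of ![fun _ => (1 : ℂ),
              fun i => 3 * (c * p (σ i)) ^ 2] : Matrix (Fin 2) (Fin 6) ℂ)))
            ≤ Module.finrank ℂ ↥(Submodule.span ℂ {fun _ => (1 : ℂ)}) :=
              Submodule.finrank_mono hle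
          _ = 1 := finrank_span_singleton hone
          _ < 2 := one_lt_two
  · set v : Finset (Fin 6) → (Fin 6 → ℂ) := fun S => fun i => if i ∈ S then 1 else -1 with hv
    have hvne : ∀ S, v S ≠ 0 := by
      intro S h
      have h0 := congrFun h 0
      by_cases h0S : (0 : Fin 6) ∈ S <;> simp [hv, h0S] at h0
    have key : {q : Projectivization ℂ (Fin 6 → ℂ) |
        ∃ (x : Fin 6 → ℂ) (hx : x ≠ 0), q = Projectivization.mk ℂ x hx ∧
          ∃ σ : Equiv.Perm (Fin 6), x = fun i => p (σ i)}
        = (fun S => Projectivization.mk ℂ (v S) (hvne S)) ''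
          {S : Finset (Fin 6) | S.card = 3 ∧ (0 : Fin 6) ∈ S} := by
      ext q
      simp only [Set.mem_setOf_eq, Set.mem_image]
      constructor
      · rintro ⟨x, hx, rfl, σ, rfl⟩
        set S0 := Finset.univ.filter (fun i => σ i ∈ T3) with hS0
        have hS0img : S0 = T3.image σ.symm := by
          ext i
          simp only [hS0, Finset.mem_filter, Finset.mem_univ, true_and, Finset.mem_image]
          constructor
          · intro h; exact ⟨σ i, h, σ.symm_apply_apply i⟩
          · rintro ⟨j, hj, rfl⟩; simpa using hj
        have hcard0 : S0.card = 3 := by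
          rw [hS0img, Finset.card_image_of_injective _ σ.symm.injective]; rfl
        have hxv : (fun i => p (σ i)) = v S0 := funext fun i => by
          rw [hpdef, hp (σ i), hv]
          simp [hS0]
        by_cases h0 : (0 : Fin 6) ∈ S0
        · refine ⟨S0, ⟨hcard0, h0⟩, ?_⟩
          rw [Projectivization.mk_eq_mk_iff']
          exact ⟨1, by rw [one_smul, hxv]⟩
        · refine ⟨S0ᶜ, ⟨by rw [Finset.card_compl, hcard0]; rfl, by simpa using h0⟩, ?_⟩
          rw [Projectivization.mk_eq_mk_iff']
          refine ⟨-1, ?_⟩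
          funext i
          rw [hxv, hv]
          simp only [Pi.smul_apply, smul_eq_mul, Finset.mem_compl]
          by_cases hi : i ∈ S0 <;> simp [hi]
      · rintro ⟨S, ⟨hc, h0⟩, rfl⟩
        obtain ⟨σ, hσ⟩ := exists_perm S hc
        refine ⟨v S, hvne S, rfl, σ, funext fun i => ?_⟩
        rw [hpdef, hp (σ i), hv]
        simp only []
        by_cases hi : i ∈ S
        · rw [if_pos ((hσ i).2 hi), if_pos hi]
        · rw [if_neg (fun h => hi ((hσ i).1 h)), if_neg hi]
    rw [key]
    have hinj : Set.InjOn (fun S => Projectivization.mk ℂ (v S) (hvne S))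
        {S : Finset (Fin 6) | S.card = 3 ∧ (0 : Fin 6) ∈ S} := by
      rintro S ⟨_, h0S⟩ S' ⟨_, h0S'⟩ h
      simp only [Projectivization.mk_eq_mk_iff'] at h
      obtain ⟨a, ha⟩ := h
      have h00 := congrFun ha 0
      simp only [Pi.smul_apply, smul_eq_mul, hv, if_pos h0S, if_pos h0S'] at h00
      rw [mul_one] at h00
      subst h00
      rw [one_smul] at ha
      ext i
      have := congrFun ha i
      simp only [hv] at this
      by_cases hi : i ∈ S' <;> by_cases hi' : i ∈ S <;>
        simp [hi, hi'] at this ⊢ <;> norm_num at this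
    rw [Set.ncard_image_of_injOn hinj]
    have : {S : Finset (Fin 6) | S.card = 3 ∧ (0 : Fin 6) ∈ S}
        = ↑(Finset.univ.filter fun S : Finset (Fin 6) => S.card = 3 ∧ (0 : Fin 6) ∈ S) := by
      ext S; simp
    rw [this, Set.ncard_coe_finset]
    decide
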